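/- Let A be a finite commutative group and b : A × A → ℂˣ a nondegenerate alternating bilinear pairing. Then (A, b) admits a Lagrangian decomposition: there exist Lagrangian subgroups J and K of A such that A is the internal direct product of J and K (J ∩ K = {1} and J·K = A) and the map sending k ∈ K to the character j ↦ b(k, j) of J is a group isomorphism from K onto the character group Hom(J, ℂˣ). -/

import Mathlib

/-- A subgroup `J` of a commutative group `A` is *Lagrangian* for a pairing
`b : A × A → ℂˣ` if `J` equals its own annihilator:
`J = {a ∈ A : b(a, j) = 1 for all j ∈ J}`. -/
def IsLagrangian {A : Type*} [CommGroup A] (b : A → A → ℂˣ) (J : Subgroup A) : Prop :=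
  ∀ a : A, a ∈ J ↔ ∀ j ∈ J, b a j = 1

/-- `(J, K)` is a *Lagrangian decomposition* of `(A, b)` : both `J` and `K` are Lagrangian,
`A` is the internal direct product of `J` and `K`, and the map sending `k ∈ K` to the
character `j ↦ b(k, j)` of `J` is a bijection of `K` onto the character group
`Hom(J, ℂˣ)` (by bilinearity of `b` this bijection is automatically a group isomorphism). -/
def IsLagrangianDecomp {A : Type*} [CommGroup A] (b : A → A → ℂˣ) (J K : Subgroup A) : Prop :=
  IsLagrangian b J ∧ IsLagrangian b K ∧
  J ⊓ K = ⊥ ∧ (∀ a : A, ∃ j ∈ J, ∃ k ∈ K, a = j * k) ∧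
  Function.Injective (fun k : K => fun j : J => b (k : A) (j : A)) ∧
  (∀ φ : ↥J →* ℂˣ, ∃ k : K, ∀ j : J, b (k : A) (j : A) = φ j)

universe u

private theorem lag_aux (N : ℕ) :
    ∀ (A : Type u) [CommGroup A] [Finite A] (b : A → A → ℂˣ),
      Nat.card A ≤ N →
      (∀ x y z : A, b (x * y) z = b x z * b y z) →
      (∀ x y z : A, b x (y * z) = b x y * b x z) →
      (∀ x : A, b x x = 1) →
      (∀ x : A, (∀ y : A, b x y = 1) → x = 1) →
      ∃ J K : Subgroup A, IsLagrangianDecomp b J K := by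
  induction N with
  | zero =>
      intro A _ _ b hcard _ _ _ _
      have := Nat.card_pos (α := A)
      omega
  | succ N ih =>
      intro A _ _ b hcard hbil₁ hbil₂ halt hnd
      rcases subsingleton_or_nontrivial A with hs | hs
      · -- trivial group : take J = K = ⊥
        have hlagbot : IsLagrangian b (⊥ : Subgroup A) := by
          intro x
          constructor
          · intro hx j hj
            rw [Subgroup.mem_bot] at hx hj
            rw [hx, hj]; exact halt 1
          · intro _
            exact Subgroup.mem_bot.mpr (Subsingleton.elim x 1)
        refine ⟨⊥, ⊥, hlagbot, hlagbot, by simp, ?_, ?_, ?_⟩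
        · intro x
          exact ⟨1, one_mem _, 1, one_mem _, Subsingleton.elim _ _⟩
        · intro k₁ k₂ _
          exact Subsingleton.elim _ _
        · intro φ
          refine ⟨1, fun j => ?_⟩
          have hj : j = 1 := Subsingleton.elim _ _
          rw [hj, map_one]
          simpa using halt 1
      · -- nontrivial group
        set n := Monoid.exponent A with hn_def
        have hn : 1 < n := Monoid.one_lt_exponent
        haveI : NeZero n := ⟨by omega⟩
        obtain ⟨a, ha⟩ :=
          Monoid.exists_orderOf_eq_exponent (Monoid.ExponentExists.of_finite (G := A))
        -- the pairing as a monoid hom in each variable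
        let bl : A →* A →* ℂˣ :=
          MonoidHom.mk' (fun x => MonoidHom.mk' (fun y => b x y) (hbil₂ x))
            (fun x y => MonoidHom.ext fun z => hbil₁ x y z)
        have hz₁ : ∀ (x y : A) (i : ℤ), b (x ^ i) y = b x y ^ i :=
          fun x y i => map_zpow (bl.flip y) x i
        have hz₂ : ∀ (x y : A) (i : ℤ), b x (y ^ i) = b x y ^ i :=
          fun x y i => map_zpow (bl x) y i
        have hinv₁ : ∀ x y : A, b x⁻¹ y = (b x y)⁻¹ := fun x y => map_inv (bl.flip y) x
        have hone₁ : ∀ y : A, b 1 y = 1 := fun y => map_one (bl.flip y)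
        have hskew : ∀ x y : A, b y x = (b x y)⁻¹ := by
          intro x y
          have h0 := halt (x * y)
          rw [hbil₁ x y (x * y), hbil₂ x x y, hbil₂ y x y, halt x, halt y, one_mul,
            mul_one] at h0
          exact eq_inv_of_mul_eq_one_right h0
        have hxn : ∀ x : A, x ^ n = 1 := fun x => Monoid.pow_exponent_eq_one x
        have hinj : Function.Injective bl := by
          rw [injective_iff_map_eq_one]
          intro x hx
          exact hnd x fun y => by
            have : bl x y = (1 : A →* ℂˣ) y := by rw [hx]
            exact this.trans (MonoidHom.one_apply y)
        have hχ : orderOf (bl a) = n := by rw [orderOf_injective bl hinj, ha]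
        -- the image of the character y ↦ b a y is cyclic; get a generator ζ of order n
        haveI hSfin : Finite ↥(bl a).range := (Set.finite_range (bl a)).to_subtype
        obtain ⟨g, hg⟩ := IsCyclic.exists_generator (α := ↥(bl a).range)
        have hgcard : orderOf g = Nat.card ↥(bl a).range :=
          orderOf_eq_card_of_forall_mem_zpowers hg
        have hordχ : orderOf (bl a) = Monoid.exponent ↥(bl a).range := by
          apply Nat.dvd_antisymm
          · apply orderOf_dvd_of_pow_eq_one
            apply MonoidHom.ext
            intro y
            have h3 := Monoid.pow_exponent_eq_one (⟨bl a y, ⟨y, rfl⟩⟩ : ↥(bl a).range)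
            have h2 : (bl a y) ^ Monoid.exponent ↥(bl a).range = 1 := by
              simpa using congrArg Subtype.val h3
            simpa using h2
          · apply Monoid.exponent_dvd_of_forall_pow_eq_one
            rintro ⟨s, y, rfl⟩
            apply Subtype.ext
            push_cast
            rw [← MonoidHom.pow_apply, pow_orderOf_eq_one]
            rfl
        have hordS : Monoid.exponent ↥(bl a).range = Nat.card ↥(bl a).range :=
          IsCyclic.exponent_eq_card
        obtain ⟨c, hc⟩ : ∃ c, bl a c = ↑g := g.2
        set ζ := b a c with hζ_def
        have hgζ : ζ = ↑g := hc
        have hζord : orderOf ζ = n := by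
          rw [hgζ, Subgroup.orderOf_coe, hgcard, ← hordS, ← hordχ, hχ]
        have hζne : ζ ≠ 1 := by
          intro h; rw [h, orderOf_one] at hζord; omega
        have hac : b a c = ζ := rfl
        have hca : b c a = ζ⁻¹ := by rw [hskew a c]
        have hprim : ∀ u : ℂˣ, u ^ n = 1 → ∃ i : ℤ, u = ζ ^ i := by
          have hpr : IsPrimitiveRoot ζ n := by
            rw [← hζord]; exact IsPrimitiveRoot.orderOf ζ
          intro u hu
          have hmem : u ∈ rootsOfUnity n ℂ := (mem_rootsOfUnity n u).mpr hu
          rw [← hpr.zpowers_eq] at hmem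
          obtain ⟨i, hi⟩ := Subgroup.mem_zpowers_iff.mp hmem
          exact ⟨i, hi.symm⟩
        -- the orthogonal complement of ⟨a, c⟩
        set P : Subgroup A := (bl.flip a).ker ⊓ (bl.flip c).ker with hP_def
        have hPmem : ∀ x : A, x ∈ P ↔ b x a = 1 ∧ b x c = 1 := by
          intro x
          rw [hP_def, Subgroup.mem_inf, MonoidHom.mem_ker, MonoidHom.mem_ker]
          rfl
        have hPa : ∀ p ∈ P, b p a = 1 := fun p hp => ((hPmem p).mp hp).1
        have hPc : ∀ p ∈ P, b p c = 1 := fun p hp => ((hPmem p).mp hp).2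
        have haP : ∀ p ∈ P, b a p = 1 := fun p hp => by
          rw [hskew p a, hPa p hp, inv_one]
        have hcP : ∀ p ∈ P, b c p = 1 := fun p hp => by
          rw [hskew p c, hPc p hp, inv_one]
        -- every element decomposes as a^i c^j p with p ∈ P
        have hdec : ∀ x : A, ∃ (i j : ℤ) (p : A), p ∈ P ∧ x = a ^ i * c ^ j * p := by
          intro x
          obtain ⟨i, hi⟩ := hprim (b x c) (by
            have h4 := map_pow (bl.flip c) x n
            rw [hxn x] at h4
            rw [map_one] at h4
            exact h4.symm)
          obtain ⟨j, hj⟩ := hprim (b x a) (by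
            have h4 := map_pow (bl.flip a) x n
            rw [hxn x] at h4
            rw [map_one] at h4
            exact h4.symm)
          refine ⟨i, -j, (a ^ i * c ^ (-j : ℤ))⁻¹ * x, ?_, by group⟩
          rw [hPmem]
          constructor
          · simp only [hbil₁, hinv₁, hz₁, halt, hca, hj, one_zpow]
            group
          · simp only [hbil₁, hinv₁, hz₁, halt, hac, hi, one_zpow]
            group
        -- P is a proper subgroup
        have hcP' : c ∉ P := by
          intro hcp
          have h5 := hPa c hcp
          rw [hca, inv_eq_one] at h5
          exact hζne h5
        have hcardP : Nat.card ↥P < Nat.card A := by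
          have hne : P ≠ ⊤ := fun h => hcP' (h ▸ Subgroup.mem_top c)
          have hdvd := Subgroup.card_subgroup_dvd_card P
          have hle := Nat.le_of_dvd Nat.card_pos hdvd
          exact lt_of_le_of_ne hle fun h => hne (Subgroup.eq_top_of_card_eq P h)
        -- apply the inductive hypothesis to P
        obtain ⟨J', K', hlagJ', hlagK', hinf', hsup', hinj', hsurj'⟩ :=
          ih ↥P (fun x y => b ↑x ↑y) (by omega)
            (fun x y z => hbil₁ ↑x ↑y ↑z)
            (fun x y z => hbil₂ ↑x ↑y ↑z)
            (fun x => halt ↑x)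
            (fun x hx => by
              have hy : ∀ y : A, b ↑x y = 1 := by
                intro y
                obtain ⟨i, j, p, hp, rfl⟩ := hdec y
                have h1 : b (↑x) a = 1 := hPa ↑x x.2
                have h2 : b (↑x) c = 1 := hPc ↑x x.2
                have h3 : b (↑x) p = 1 := hx ⟨p, hp⟩
                simp only [hbil₂, hz₂, h1, h2, h3, one_zpow, one_mul]
              exact_mod_cast hnd ↑x hy)
        set J : Subgroup A := Subgroup.zpowers a ⊔ J'.map P.subtype with hJ_def
        set K : Subgroup A := Subgroup.zpowers c ⊔ K'.map P.subtype with hK_def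
        have hJmem : ∀ x : A, x ∈ J ↔ ∃ (i : ℤ) (u : ↥P), u ∈ J' ∧ x = a ^ i * ↑u := by
          intro x
          constructor
          · intro hx
            obtain ⟨y, hy, z, hz, hyz⟩ := Subgroup.mem_sup.mp hx
            obtain ⟨i, rfl⟩ := Subgroup.mem_zpowers_iff.mp hy
            obtain ⟨u, hu, rfl⟩ := Subgroup.mem_map.mp hz
            exact ⟨i, u, hu, hyz.symm⟩
          · rintro ⟨i, u, hu, rfl⟩
            exact Subgroup.mem_sup.mpr ⟨a ^ i, Subgroup.mem_zpowers_iff.mpr ⟨i, rfl⟩, ↑u,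
              Subgroup.mem_map.mpr ⟨u, hu, rfl⟩, rfl⟩
        have hKmem : ∀ x : A, x ∈ K ↔ ∃ (j : ℤ) (v : ↥P), v ∈ K' ∧ x = c ^ j * ↑v := by
          intro x
          constructor
          · intro hx
            obtain ⟨y, hy, z, hz, hyz⟩ := Subgroup.mem_sup.mp hx
            obtain ⟨j, rfl⟩ := Subgroup.mem_zpowers_iff.mp hy
            obtain ⟨v, hv, rfl⟩ := Subgroup.mem_map.mp hz
            exact ⟨j, v, hv, hyz.symm⟩
          · rintro ⟨j, v, hv, rfl⟩
            exact Subgroup.mem_sup.mpr ⟨c ^ j, Subgroup.mem_zpowers_iff.mpr ⟨j, rfl⟩, ↑v,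
              Subgroup.mem_map.mpr ⟨v, hv, rfl⟩, rfl⟩
        have haJ : a ∈ J := (hJmem a).mpr ⟨1, 1, one_mem _, by simp⟩
        have hcK : c ∈ K := (hKmem c).mpr ⟨1, 1, one_mem _, by simp⟩
        have hJ'leJ : ∀ u : ↥P, u ∈ J' → (↑u : A) ∈ J :=
          fun u hu => (hJmem ↑u).mpr ⟨0, u, hu, by simp⟩
        have hK'leK : ∀ v : ↥P, v ∈ K' → (↑v : A) ∈ K :=
          fun v hv => (hKmem ↑v).mpr ⟨0, v, hv, by simp⟩
        -- auxiliary: from ζ ^ j = 1 conclude powers vanish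
        have hzpow_a : ∀ i : ℤ, ζ ^ i = 1 → a ^ i = 1 := by
          intro i hi
          have hdvd : ((n : ℤ)) ∣ i := by
            rw [← hζord]
            exact orderOf_dvd_iff_zpow_eq_one.mpr hi
          obtain ⟨t, rfl⟩ := hdvd
          rw [zpow_mul, zpow_natCast, hxn a, one_zpow]
        have hzpow_c : ∀ i : ℤ, ζ ^ i = 1 → c ^ i = 1 := by
          intro i hi
          have hdvd : ((n : ℤ)) ∣ i := by
            rw [← hζord]
            exact orderOf_dvd_iff_zpow_eq_one.mpr hi
          obtain ⟨t, rfl⟩ := hdvd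
          rw [zpow_mul, zpow_natCast, hxn c, one_zpow]
        -- J is Lagrangian
        have hJlag : IsLagrangian b J := by
          intro x
          constructor
          · intro hx j hj
            obtain ⟨i, u, hu, rfl⟩ := (hJmem x).mp hx
            obtain ⟨e, v, hv, rfl⟩ := (hJmem j).mp hj
            have h1 : b ↑u ↑v = 1 := (hlagJ' u).mp hu v hv
            simp only [hbil₁, hbil₂, hz₁, hz₂, halt, haP ↑v v.2, hPa ↑u u.2, h1, one_zpow,
              one_mul, mul_one]
          · intro hx
            obtain ⟨i, j, p, hp, rfl⟩ := hdec x
            have h1 : b (a ^ i * c ^ j * p) a = 1 := hx a haJ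
            simp only [hbil₁, hz₁, halt, hca, hPa p hp, one_zpow, one_mul, mul_one,
              inv_zpow, inv_eq_one] at h1
            have hcj : c ^ j = 1 := hzpow_c j h1
            rw [hcj, mul_one]
            have hpJ' : (⟨p, hp⟩ : ↥P) ∈ J' := by
              apply (hlagJ' ⟨p, hp⟩).mpr
              intro v hv
              have h3 := hx ↑v (hJ'leJ v hv)
              rw [hcj, mul_one] at h3
              simpa only [hbil₁, hz₁, haP ↑v v.2, one_zpow, one_mul] using h3
            exact (hJmem _).mpr ⟨i, ⟨p, hp⟩, hpJ', rfl⟩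
        -- K is Lagrangian
        have hKlag : IsLagrangian b K := by
          intro x
          constructor
          · intro hx j hj
            obtain ⟨i, u, hu, rfl⟩ := (hKmem x).mp hx
            obtain ⟨e, v, hv, rfl⟩ := (hKmem j).mp hj
            have h1 : b ↑u ↑v = 1 := (hlagK' u).mp hu v hv
            simp only [hbil₁, hbil₂, hz₁, hz₂, halt, hcP ↑v v.2, hPc ↑u u.2, h1, one_zpow,
              one_mul, mul_one]
          · intro hx
            obtain ⟨i, j, p, hp, rfl⟩ := hdec x
            have h1 : b (a ^ i * c ^ j * p) c = 1 := hx c hcK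
            simp only [hbil₁, hz₁, halt, hac, hPc p hp, one_zpow, one_mul, mul_one] at h1
            have hai : a ^ i = 1 := hzpow_a i h1
            rw [hai, one_mul]
            have hpK' : (⟨p, hp⟩ : ↥P) ∈ K' := by
              apply (hlagK' ⟨p, hp⟩).mpr
              intro v hv
              have h3 := hx ↑v (hK'leK v hv)
              rw [hai, one_mul] at h3
              simpa only [hbil₁, hz₁, hcP ↑v v.2, one_zpow, one_mul] using h3
            exact (hKmem _).mpr ⟨j, ⟨p, hp⟩, hpK', rfl⟩
        -- trivial intersection
        have hinfJK : J ⊓ K = ⊥ := by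
          rw [Subgroup.eq_bot_iff_forall]
          intro x hx
          obtain ⟨hxJ, hxK⟩ := Subgroup.mem_inf.mp hx
          obtain ⟨i, u, hu, hx1⟩ := (hJmem x).mp hxJ
          obtain ⟨j, v, hv, hx2⟩ := (hKmem x).mp hxK
          have e1 : b x a = 1 := by
            rw [hx1]
            simp only [hbil₁, hz₁, halt, hPa ↑u u.2, one_zpow, one_mul, mul_one]
          have e2 : b x a = (ζ⁻¹) ^ j := by
            rw [hx2]
            simp only [hbil₁, hz₁, hca, hPa ↑v v.2, mul_one]
          have hzj : ζ ^ j = 1 := by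
            have : (ζ⁻¹) ^ j = 1 := by rw [← e2, e1]
            rwa [inv_zpow, inv_eq_one] at this
          have hcj : c ^ j = 1 := hzpow_c j hzj
          have hxv : x = ↑v := by rw [hx2, hcj, one_mul]
          have e3 : b x c = ζ ^ i := by
            rw [hx1]
            simp only [hbil₁, hz₁, hac, hPc ↑u u.2, mul_one]
          have e4 : b x c = 1 := by rw [hxv]; exact hPc ↑v v.2
          have hzi : ζ ^ i = 1 := by rw [← e3, e4]
          have hai : a ^ i = 1 := hzpow_a i hzi
          have hxu : x = ↑u := by rw [hx1, hai, one_mul]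
          have huv : u = v := Subtype.coe_injective (hxu.symm.trans hxv)
          have humem : u ∈ J' ⊓ K' := Subgroup.mem_inf.mpr ⟨hu, by rw [huv]; exact hv⟩
          rw [hinf'] at humem
          have hu1 := Subgroup.mem_bot.mp humem
          rw [hxu, hu1]
          simp
        -- product decomposition
        have hprod : ∀ x : A, ∃ j ∈ J, ∃ k ∈ K, x = j * k := by
          intro x
          obtain ⟨i, j, p, hp, rfl⟩ := hdec x
          obtain ⟨u, hu, v, hv, huv⟩ := hsup' ⟨p, hp⟩
          refine ⟨a ^ i * ↑u, (hJmem _).mpr ⟨i, u, hu, rfl⟩, c ^ j * ↑v,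
            (hKmem _).mpr ⟨j, v, hv, rfl⟩, ?_⟩
          have hpv : p = ↑u * ↑v := by
            have h6 := congrArg (Subtype.val) huv
            simpa using h6
          rw [hpv]
          ac_rfl
        -- injectivity of the character map
        have hinjmap : Function.Injective (fun k : ↥K => fun j : ↥J => b ↑k ↑j) := by
          intro k₁ k₂ h
          have hd : ∀ y : A, b (↑k₁ * (↑k₂)⁻¹) y = 1 := by
            intro y
            obtain ⟨j, hj, k, hk, rfl⟩ := hprod y
            have h1 : b ↑k₁ j = b ↑k₂ j := congrFun h ⟨j, hj⟩
            have hdK : (↑k₁ * (↑k₂)⁻¹ : A) ∈ K := mul_mem k₁.2 (inv_mem k₂.2)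
            have h2 : b (↑k₁ * (↑k₂)⁻¹) k = 1 := (hKlag _).mp hdK k hk
            rw [hbil₂, h2, mul_one, hbil₁, hinv₁, h1]
            simp
          have h7 : (↑k₁ * (↑k₂)⁻¹ : A) = 1 := hnd _ hd
          have h8 : (k₁ : A) = ↑k₂ := by rwa [mul_inv_eq_one] at h7
          exact Subtype.ext h8
        -- surjectivity onto the character group of J
        have hsurjmap : ∀ φ : ↥J →* ℂˣ, ∃ k : ↥K, ∀ j : ↥J, b ↑k ↑j = φ j := by
          intro φ
          have hφa : (φ ⟨a, haJ⟩) ^ n = 1 := by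
            rw [← map_pow]
            have h0 : ((⟨a, haJ⟩ : ↥J) ^ n : ↥J) = 1 := by
              apply Subtype.ext
              push_cast
              exact hxn a
            rw [h0, map_one]
          obtain ⟨m, hm⟩ := hprim _ hφa
          let ι : ↥J' →* ↥J :=
            (Subgroup.inclusion (le_sup_right : J'.map P.subtype ≤ J)).comp
              (P.subtype.subgroupMap J')
          obtain ⟨k', hk'⟩ := hsurj' (φ.comp ι)
          refine ⟨⟨c ^ (-m) * ↑↑k', (hKmem _).mpr ⟨-m, ↑k', k'.2, rfl⟩⟩, ?_⟩
          intro j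
          obtain ⟨i, u, hu, hju⟩ := (hJmem ↑j).mp j.2
          have hjeq : j = (⟨a, haJ⟩ : ↥J) ^ i * ⟨↑u, hJ'leJ u hu⟩ := by
            apply Subtype.ext
            push_cast
            exact hju
          have hφj : φ j = (ζ ^ m) ^ i * φ ⟨↑u, hJ'leJ u hu⟩ := by
            rw [hjeq, map_mul, map_zpow, hm]
          have hιu : ι ⟨u, hu⟩ = ⟨↑u, hJ'leJ u hu⟩ := Subtype.ext rfl
          have hk'u : b (↑↑k') ↑u = φ ⟨↑u, hJ'leJ u hu⟩ := by
            have h9 := hk' ⟨u, hu⟩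
            rwa [MonoidHom.comp_apply, hιu] at h9
          show b (c ^ (-m) * ↑↑k') ↑j = φ j
          rw [hju, hφj]
          simp only [hbil₁, hbil₂, hz₁, hz₂, hca, hk'u, hPa ↑↑k' (↑k' : ↥P).2,
            hcP ↑u u.2, one_zpow, mul_one, one_mul]
          group
        exact ⟨J, K, hJlag, hKlag, hinfJK, hprod, hinjmap, hsurjmap⟩

/-- Existence part of Lemma 3.1: a finite commutative group with a nondegenerate
alternating bilinear pairing admits a Lagrangian decomposition. -/
theorem lagrangian_decomposition_exists
    {A : Type*} [CommGroup A] [Finite A] (b : A → A → ℂˣ)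
    (hbil₁ : ∀ x y z : A, b (x * y) z = b x z * b y z)
    (hbil₂ : ∀ x y z : A, b x (y * z) = b x y * b x z)
    (halt : ∀ x : A, b x x = 1)
    (hnd : ∀ x : A, (∀ y : A, b x y = 1) → x = 1) :
    ∃ J K : Subgroup A, IsLagrangianDecomp b J K := by
  exact lag_aux (Nat.card A) A b le_rfl hbil₁ hbil₂ halt hnd
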